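/- arXiv:2403.04046 — 4 statements merged into one kernel-verified Lean document; each statement's English description precedes it below -/
import Mathlib

section
/- Let X be a nonempty set and let c₀(X, ℚ_p) = {ξ : X → ℚ_p : for every ε > 0 the set {x : |ξ(x)|_p ≥ ε} is finite}. Then c₀(X, ℚ_p) is the largest ℚ_p-vector subspace of ℚ_p(X): if K is a ℚ_p-subspace with c₀(X,ℚ_p) ⊆ K ⊆ ℚ_p(X), then K = c₀(X, ℚ_p). -/
/-- `c₀(X, ℚ_p)` is the largest `ℚ_p`-vector subspace of `ℚ_p(X)`: any `ℚ_p`-subspace `K`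
with `c₀(X, ℚ_p) ⊆ K ⊆ ℚ_p(X)` equals `c₀(X, ℚ_p)`. -/
theorem stmt5 (p : ℕ) [Fact p.Prime] (X : Type*) [Nonempty X]
    (K : Set (X → ℚ_[p]))
    (hKsub : ∀ ξ ∈ K, {x : X | 1 < ‖ξ x‖}.Finite)
    (hc0K : {ξ : X → ℚ_[p] | ∀ ε : ℝ, 0 < ε → {x : X | ε ≤ ‖ξ x‖}.Finite} ⊆ K)
    (hadd : ∀ ξ ∈ K, ∀ η ∈ K, ξ + η ∈ K)
    (hsmul : ∀ (c : ℚ_[p]), ∀ ξ ∈ K, (fun x => c * ξ x) ∈ K) :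
    K = {ξ : X → ℚ_[p] | ∀ ε : ℝ, 0 < ε → {x : X | ε ≤ ‖ξ x‖}.Finite} := by
  apply Set.Subset.antisymm _ hc0K
  intro ξ hξ ε hε
  have hp1 : (1 : ℝ) < (p : ℝ) := by
    exact_mod_cast (Fact.out : p.Prime).one_lt
  obtain ⟨n, hn⟩ := pow_unbounded_of_one_lt (ε⁻¹) hp1
  set c : ℚ_[p] := ((p : ℚ_[p])⁻¹) ^ n with hc
  have hcK := hsmul c ξ hξ
  have hfin := hKsub _ hcK
  have hnormc : ‖c‖ = (p : ℝ) ^ n := by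
    rw [hc, norm_pow, norm_inv, Padic.norm_p, inv_inv]
  apply hfin.subset
  intro x hx
  simp only [Set.mem_setOf_eq] at hx ⊢
  rw [norm_mul, hnormc]
  have hεp : ε⁻¹ * ε < (p:ℝ)^n * ε :=
    mul_lt_mul_of_pos_right hn hε
  rw [inv_mul_cancel₀ (ne_of_gt hε)] at hεp
  calc (1:ℝ) < (p:ℝ)^n * ε := hεp
    _ ≤ (p:ℝ)^n * ‖ξ x‖ := by
        apply mul_le_mul_of_nonneg_left hx (by positivity)
end

section
/- Let X be a nonempty set and T : ℚ_p(X) → ℚ_p(X) a ℤ_p-linear map. Then for every y ∈ X, the function x ↦ T(δ_y)(x) tends to 0 at infinity: for every ε > 0 there is a finite subset F ⊆ X such that |T(δ_y)(x)|_p < ε for all x ∉ F. -/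
open scoped Classical

/-- For a `ℤ_p`-linear map `T : ℚ_p(X) → ℚ_p(X)` and any `y ∈ X`, the function
`x ↦ T(δ_y)(x)` tends to `0` at infinity. -/
theorem stmt11 (p : ℕ) [Fact p.Prime] (X : Type*) [Nonempty X]
    (T : (X → ℚ_[p]) → X → ℚ_[p])
    (hmem : ∀ ξ : X → ℚ_[p], {x : X | 1 < ‖ξ x‖}.Finite →
      {x : X | 1 < ‖T ξ x‖}.Finite)
    (hadd : ∀ ξ η : X → ℚ_[p], {x : X | 1 < ‖ξ x‖}.Finite →
      {x : X | 1 < ‖η x‖}.Finite → T (ξ + η) = T ξ + T η)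
    (hsmul : ∀ (c : ℤ_[p]) (ξ : X → ℚ_[p]), {x : X | 1 < ‖ξ x‖}.Finite →
      T (fun x => (c : ℚ_[p]) * ξ x) = fun x => (c : ℚ_[p]) * T ξ x) :
    ∀ y : X, ∀ ε : ℝ, 0 < ε → ∃ F : Finset X, ∀ x : X, x ∉ F →
      ‖T (fun x => if x = y then (1 : ℚ_[p]) else 0) x‖ < ε := by
  intro y ε hε
  have hp : p.Prime := Fact.out
  have hp1 : (1 : ℝ) < (p : ℝ) := by exact_mod_cast hp.one_lt
  have hpinv : (p : ℝ)⁻¹ < 1 := inv_lt_one_of_one_lt₀ hp1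
  obtain ⟨n, hn⟩ := exists_pow_lt_of_lt_one hε hpinv
  have hpQ : ((p : ℚ_[p]) ^ n) ≠ 0 := pow_ne_zero _ (by exact_mod_cast hp.ne_zero)
  set ξ : X → ℚ_[p] := fun x => ((p : ℚ_[p]) ^ n)⁻¹ * (if x = y then 1 else 0) with hξ
  have hξfin : {x : X | 1 < ‖ξ x‖}.Finite := by
    apply Set.Finite.subset (Set.finite_singleton y)
    intro x hx
    simp only [Set.mem_setOf_eq, hξ] at hx
    by_contra h
    have h' : x ≠ y := fun e => h (by simp [e])
    simp [h'] at hx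
    linarith
  have key := hsmul ((p : ℤ_[p]) ^ n) ξ hξfin
  have hδ : (fun x => (((p : ℤ_[p]) ^ n : ℤ_[p]) : ℚ_[p]) * ξ x)
      = (fun x => if x = y then (1 : ℚ_[p]) else 0) := by
    funext x
    simp only [hξ]
    push_cast
    field_simp
  rw [hδ] at key
  have hTfin := hmem ξ hξfin
  refine ⟨hTfin.toFinset, fun x hx => ?_⟩
  have hle : ‖T ξ x‖ ≤ 1 := by
    by_contra h
    exact hx (hTfin.mem_toFinset.mpr (lt_of_not_ge h))
  have : T (fun x => if x = y then (1 : ℚ_[p]) else 0) x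
      = (((p : ℤ_[p]) ^ n : ℤ_[p]) : ℚ_[p]) * T ξ x := by rw [key]
  rw [this, norm_mul]
  have hnorm : ‖(((p : ℤ_[p]) ^ n : ℤ_[p]) : ℚ_[p])‖ = (p : ℝ)⁻¹ ^ n := by
    push_cast
    rw [norm_pow, Padic.norm_p]
  rw [hnorm]
  calc (p : ℝ)⁻¹ ^ n * ‖T ξ x‖ ≤ (p : ℝ)⁻¹ ^ n * 1 := by
        exact mul_le_mul_of_nonneg_left hle (by positivity)
    _ = (p : ℝ)⁻¹ ^ n := mul_one _
    _ < ε := hn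
end

section
/- Let T : ℚ_p(X) → ℚ_p(X) be a ℤ_p-linear adjointable operator with ‖T‖ ≤ 1 (operator norm with respect to the sup-norm). Then ‖T‖ = max_{x,y ∈ X} |T_{x,y}|_p, where T_{x,y} = T(δ_y)(x); consequently ‖T*‖ = ‖T‖, i.e. the involution is isometric. -/
open scoped Classical

/-- For a `ℤ_p`-linear adjointable contraction `T` on `ℚ_p(X)`, the operator norm equals
the sup of the absolute values of the matrix entries `T_{x,y} = T(δ_y)(x)`; consequently
`‖T*‖ = ‖T‖`, i.e. the involution is isometric. -/
theorem stmt16 (p : ℕ) [Fact p.Prime] (X : Type*) [Nonempty X]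
    (T Ts : (X → ℚ_[p]) → X → ℚ_[p]) :
    let Z : AddSubgroup ℚ_[p] := (PadicInt.subring p).toAddSubgroup
    let Mem : (X → ℚ_[p]) → Prop := fun ξ => {x : X | 1 < ‖ξ x‖}.Finite
    let Nrm : (X → ℚ_[p]) → ℝ := fun ξ => ⨆ x, ‖ξ x‖
    let pair : (X → ℚ_[p]) → (X → ℚ_[p]) → ℚ_[p] ⧸ Z :=
      fun ξ η => ∑ᶠ x : X, (QuotientAddGroup.mk (ξ x * η x) : ℚ_[p] ⧸ Z)
    let δ : X → X → ℚ_[p] := fun y x => if x = y then 1 else 0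
    let opNorm : ((X → ℚ_[p]) → X → ℚ_[p]) → ℝ := fun A =>
      sSup {r : ℝ | ∃ ξ : X → ℚ_[p], Mem ξ ∧ Nrm ξ ≤ 1 ∧ r = Nrm (A ξ)}
    (∀ ξ : X → ℚ_[p], Mem ξ → Mem (T ξ)) →
    (∀ η : X → ℚ_[p], Mem η → Mem (Ts η)) →
    (∀ ξ η : X → ℚ_[p], Mem ξ → Mem η → T (ξ + η) = T ξ + T η) →
    (∀ (c : ℤ_[p]) (ξ : X → ℚ_[p]), Mem ξ →
        T (fun x => (c : ℚ_[p]) * ξ x) = fun x => (c : ℚ_[p]) * T ξ x) →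
    (∀ ξ η : X → ℚ_[p], Mem ξ → Mem η → Ts (ξ + η) = Ts ξ + Ts η) →
    (∀ (c : ℤ_[p]) (ξ : X → ℚ_[p]), Mem ξ →
        Ts (fun x => (c : ℚ_[p]) * ξ x) = fun x => (c : ℚ_[p]) * Ts ξ x) →
    (∀ ξ η : X → ℚ_[p], Mem ξ → Mem η → pair (T ξ) η = pair ξ (Ts η)) →
    (∀ ξ : X → ℚ_[p], Mem ξ → Nrm ξ ≤ 1 → Nrm (T ξ) ≤ 1) →
    opNorm T = (⨆ x, ⨆ y, ‖T (δ y) x‖) ∧ opNorm Ts = opNorm T := by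
  intro Z Mem Nrm pair δ opNorm hMT hMTs haT hsT haTs hsTs hadj hc
  have hp : p.Prime := Fact.out
  have hp1 : (1:ℝ) < (p:ℝ) := by exact_mod_cast hp.one_lt
  have hppos : (0:ℝ) < (p:ℝ) := lt_trans one_pos hp1
  have hpQne : ((p:ℚ_[p])) ≠ 0 := by
    exact_mod_cast (Nat.cast_ne_zero (R := ℚ_[p])).2 hp.ne_zero
  have hpn_ne : ∀ n : ℕ, ((p:ℚ_[p])^n) ≠ 0 := fun n => pow_ne_zero _ hpQne
  -- norm of (p^n)⁻¹
  have hnorm_pinv : ∀ n : ℕ, ‖(((p:ℚ_[p])^n)⁻¹)‖ = (p:ℝ)^n := by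
    intro n; rw [norm_inv, norm_pow, Padic.norm_p, inv_pow, inv_inv]
  -- boundedness from Mem
  have hbdd : ∀ ξ : X → ℚ_[p], Mem ξ → BddAbove (Set.range fun x => ‖ξ x‖) := by
    intro ξ hξ
    have h1 : BddAbove ((fun x => ‖ξ x‖) '' {x | 1 < ‖ξ x‖}) := (hξ.image _).bddAbove
    refine (h1.union (bddAbove_Iic (a := (1:ℝ)))).mono ?_
    rintro r ⟨x, rfl⟩
    by_cases h : 1 < ‖ξ x‖
    · exact Or.inl ⟨x, h, rfl⟩
    · exact Or.inr (le_of_not_gt h)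
  have hle : ∀ ξ : X → ℚ_[p], Mem ξ → ∀ x, ‖ξ x‖ ≤ Nrm ξ :=
    fun ξ h x => le_ciSup (hbdd ξ h) x
  have hnle : ∀ (ξ : X → ℚ_[p]) (c : ℝ), (∀ x, ‖ξ x‖ ≤ c) → Nrm ξ ≤ c :=
    fun ξ c h => ciSup_le h
  -- delta facts
  have hMemδ' : ∀ (b : ℚ_[p]) (y : X), Mem (fun z => b * δ y z) := by
    intro b y
    refine Set.Finite.subset (Set.finite_singleton y) ?_
    intro z hz
    simp only [Set.mem_setOf_eq] at hz
    by_contra hzy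
    simp only [Set.mem_singleton_iff] at hzy
    have : δ y z = 0 := by simp [δ, hzy]
    rw [this, mul_zero, norm_zero] at hz
    exact absurd hz (by norm_num)
  have hMemδ : ∀ y : X, Mem (δ y) := by
    intro y
    have h := hMemδ' 1 y
    have : (fun z => (1:ℚ_[p]) * δ y z) = δ y := by funext z; rw [one_mul]
    rwa [this] at h
  have hNδ : ∀ y : X, Nrm (δ y) ≤ 1 := by
    intro y
    refine hnle _ _ fun x => ?_
    show ‖(if x = y then (1:ℚ_[p]) else 0)‖ ≤ 1
    split_ifs <;> simp
  -- quotient facts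
  have hmk : ∀ x : ℚ_[p], (QuotientAddGroup.mk x : ℚ_[p] ⧸ Z) = 0 ↔ ‖x‖ ≤ 1 := by
    intro x; rw [QuotientAddGroup.eq_zero_iff]; exact Iff.rfl
  -- pair with (scaled) deltas
  have hpairδR : ∀ (ζ : X → ℚ_[p]) (b : ℚ_[p]) (x : X),
      pair ζ (fun z => b * δ x z) = (QuotientAddGroup.mk (ζ x * b) : ℚ_[p] ⧸ Z) := by
    intro ζ b x
    show ∑ᶠ z, (QuotientAddGroup.mk (ζ z * (b * δ x z)) : ℚ_[p] ⧸ Z) = _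
    rw [finsum_eq_single _ x]
    · have : δ x x = 1 := by simp [δ]
      rw [this, mul_one]
    · intro z hz
      have : δ x z = 0 := by simp [δ, hz]
      rw [this, mul_zero, mul_zero, QuotientAddGroup.mk_zero]
  have hpairδ1 : ∀ (ζ : X → ℚ_[p]) (x : X),
      pair ζ (δ x) = (QuotientAddGroup.mk (ζ x) : ℚ_[p] ⧸ Z) := by
    intro ζ x
    have h := hpairδR ζ 1 x
    have h2 : (fun z => (1:ℚ_[p]) * δ x z) = δ x := by funext z; rw [one_mul]
    rw [h2] at h
    rw [h, mul_one]
  have hpairδL : ∀ (b : ℚ_[p]) (y : X) (ζ : X → ℚ_[p]),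
      pair (fun z => b * δ y z) ζ = (QuotientAddGroup.mk (b * ζ y) : ℚ_[p] ⧸ Z) := by
    intro b y ζ
    show ∑ᶠ z, (QuotientAddGroup.mk (b * δ y z * ζ z) : ℚ_[p] ⧸ Z) = _
    rw [finsum_eq_single _ y]
    · have : δ y y = 1 := by simp [δ]
      rw [this, mul_one]
    · intro z hz
      have : δ y z = 0 := by simp [δ, hz]
      rw [this, mul_zero, zero_mul, QuotientAddGroup.mk_zero]
  have hsymm : ∀ ξ η : X → ℚ_[p], pair ξ η = pair η ξ := by
    intro ξ η
    show ∑ᶠ z, (QuotientAddGroup.mk (ξ z * η z) : ℚ_[p] ⧸ Z)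
        = ∑ᶠ z, (QuotientAddGroup.mk (η z * ξ z) : ℚ_[p] ⧸ Z)
    exact finsum_congr fun z => by rw [mul_comm]
  -- scaling by p⁻ⁿ
  have hscale : ∀ (U : (X → ℚ_[p]) → X → ℚ_[p]),
      (∀ (c : ℤ_[p]) (ξ : X → ℚ_[p]), Mem ξ →
        U (fun x => (c : ℚ_[p]) * ξ x) = fun x => (c : ℚ_[p]) * U ξ x) →
      ∀ (n : ℕ) (y x : X),
        U (fun z => ((p:ℚ_[p])^n)⁻¹ * δ y z) x = ((p:ℚ_[p])^n)⁻¹ * U (δ y) x := by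
    intro U hsU n y x
    have h1 := hsU ((p:ℤ_[p])^n) (fun z => ((p:ℚ_[p])^n)⁻¹ * δ y z) (hMemδ' _ _)
    have hcast : (((p:ℤ_[p])^n : ℤ_[p]) : ℚ_[p]) = (p:ℚ_[p])^n := by push_cast; ring
    rw [hcast] at h1
    have h2 : (fun z => (p:ℚ_[p])^n * (((p:ℚ_[p])^n)⁻¹ * δ y z)) = δ y := by
      funext z; rw [← mul_assoc, mul_inv_cancel₀ (hpn_ne n), one_mul]
    rw [h2] at h1
    have h3 := congrFun h1 x
    field_simp at h3 ⊢
    rw [h3]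
  have hTscale := hscale T hsT
  have hTsscale := hscale Ts hsTs
  -- entries transpose
  have hent : ∀ x y : X, Ts (δ x) y = T (δ y) x := by
    intro x y
    have key : ∀ n : ℕ, ‖T (δ y) x - Ts (δ x) y‖ ≤ ((p:ℝ)^n)⁻¹ := by
      intro n
      have h := hadj (fun z => ((p:ℚ_[p])^n)⁻¹ * δ y z) (δ x) (hMemδ' _ _) (hMemδ x)
      have hl : T (fun z => ((p:ℚ_[p])^n)⁻¹ * δ y z) = fun z => ((p:ℚ_[p])^n)⁻¹ * T (δ y) z :=
        funext fun z => hTscale n y z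
      rw [hl, hpairδ1, hpairδL] at h
      -- h : mk ((p^n)⁻¹ * T (δ y) x) = mk ((p^n)⁻¹ * Ts (δ x) y)
      have hd : (QuotientAddGroup.mk (((p:ℚ_[p])^n)⁻¹ * T (δ y) x
          - ((p:ℚ_[p])^n)⁻¹ * Ts (δ x) y) : ℚ_[p] ⧸ Z) = 0 := by
        rw [QuotientAddGroup.mk_sub, h, sub_self]
      rw [hmk] at hd
      have : ((p:ℚ_[p])^n)⁻¹ * T (δ y) x - ((p:ℚ_[p])^n)⁻¹ * Ts (δ x) y
          = ((p:ℚ_[p])^n)⁻¹ * (T (δ y) x - Ts (δ x) y) := by ring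
      rw [this, norm_mul, hnorm_pinv] at hd
      rw [← le_div_iff₀' (by positivity)] at hd
      simpa [one_div] using hd
    have : ‖T (δ y) x - Ts (δ x) y‖ = 0 := by
      by_contra hne
      have hpos : 0 < ‖T (δ y) x - Ts (δ x) y‖ :=
        lt_of_le_of_ne (norm_nonneg _) (Ne.symm hne)
      obtain ⟨n, hn⟩ := exists_pow_lt_of_lt_one hpos (by
        rw [inv_lt_one_iff₀]; right; exact hp1 : (p:ℝ)⁻¹ < 1)
      have := key n
      rw [← inv_pow] at this
      exact absurd (lt_of_le_of_lt this hn) (lt_irrefl _)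
    exact (sub_eq_zero.mp (norm_eq_zero.mp this)).symm
  -- entry bounds
  have hE1 : ∀ x y : X, ‖T (δ y) x‖ ≤ 1 :=
    fun x y => le_trans (hle _ (hMT _ (hMemδ y)) x) (hc _ (hMemδ y) (hNδ y))
  set M : ℝ := ⨆ x, ⨆ y, ‖T (δ y) x‖ with hM
  have hbddIn : ∀ x : X, BddAbove (Set.range fun y => ‖T (δ y) x‖) := by
    intro x; exact ⟨1, by rintro r ⟨y, rfl⟩; exact hE1 x y⟩
  have hIn1 : ∀ x : X, (⨆ y, ‖T (δ y) x‖) ≤ 1 := fun x => ciSup_le (hE1 x)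
  have hbddOut : BddAbove (Set.range fun x => ⨆ y, ‖T (δ y) x‖) :=
    ⟨1, by rintro r ⟨x, rfl⟩; exact hIn1 x⟩
  have hEleM : ∀ x y : X, ‖T (δ y) x‖ ≤ M :=
    fun x y => le_trans (le_ciSup (hbddIn x) y) (le_ciSup hbddOut x)
  have hM1 : M ≤ 1 := ciSup_le hIn1
  have hM0 : 0 ≤ M := by
    obtain ⟨x0⟩ := (inferInstance : Nonempty X)
    exact le_trans (norm_nonneg _) (hEleM x0 x0)
  -- core bound
  have core : ∀ (A B : (X → ℚ_[p]) → X → ℚ_[p]),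
      (∀ (n : ℕ) (y x : X),
        B (fun z => ((p:ℚ_[p])^n)⁻¹ * δ y z) x = ((p:ℚ_[p])^n)⁻¹ * B (δ y) x) →
      (∀ ξ η : X → ℚ_[p], Mem ξ → Mem η → pair (A ξ) η = pair ξ (B η)) →
      (∀ x z : X, B (δ x) z = A (δ z) x) →
      (∀ x z : X, ‖A (δ z) x‖ ≤ M) →
      ∀ ξ : X → ℚ_[p], Mem ξ → Nrm ξ ≤ 1 → ∀ x, ‖A ξ x‖ ≤ M := by
    intro A B hBs hadjAB hBA hAM ξ hξ hξ1 x
    by_contra hlt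
    push_neg at hlt
    have hne : A ξ x ≠ 0 := by
      intro h; rw [h, norm_zero] at hlt; exact absurd hlt (not_lt.2 hM0)
    have hnorm : ‖A ξ x‖ = (p:ℝ) ^ (-(A ξ x).valuation) := Padic.norm_eq_zpow_neg_valuation hne
    set a : ℤ := (A ξ x).valuation with ha
    set n : ℕ := (a+1).toNat with hn
    have hterm : ∀ z : X, ‖A (δ z) x‖ ≤ (p:ℝ) ^ (-(n:ℤ)) := by
      intro z
      have h1 : ‖A (δ z) x‖ ≤ 1 := (hAM x z).trans hM1
      have h2 : ‖A (δ z) x‖ < (p:ℝ) ^ ((-a-1) + 1) := by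
        rw [sub_add_cancel]; exact lt_of_le_of_lt (hAM x z) (hlt.trans_eq hnorm)
      have h3 : ‖A (δ z) x‖ ≤ (p:ℝ) ^ (-a-1) :=
        (Padic.norm_le_pow_iff_norm_lt_pow_add_one _ _).2 h2
      rcases le_or_gt (a+1) 0 with hcase | hcase
      · have hn0 : (n:ℤ) = 0 := by omega
        rw [hn0]; simpa using h1
      · have hn0 : (n:ℤ) = a + 1 := by omega
        rw [hn0]
        have : -(a+1) = -a-1 := by ring
        rw [this]; exact h3
    have hme := hadjAB ξ (fun z => ((p:ℚ_[p])^n)⁻¹ * δ x z) hξ (hMemδ' _ _)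
    rw [hpairδR] at hme
    have hBη : B (fun z => ((p:ℚ_[p])^n)⁻¹ * δ x z)
        = fun z => ((p:ℚ_[p])^n)⁻¹ * B (δ x) z := funext fun z => hBs n x z
    rw [hBη] at hme
    have hz : pair ξ (fun z => ((p:ℚ_[p])^n)⁻¹ * B (δ x) z) = 0 := by
      show ∑ᶠ z, (QuotientAddGroup.mk (ξ z * (((p:ℚ_[p])^n)⁻¹ * B (δ x) z)) : ℚ_[p] ⧸ Z) = 0
      apply finsum_eq_zero_of_forall_eq_zero
      intro z
      rw [hmk]
      have hξz : ‖ξ z‖ ≤ 1 := (hle ξ hξ z).trans hξ1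
      have hw : ‖((p:ℚ_[p])^n)⁻¹ * B (δ x) z‖ ≤ 1 := by
        rw [norm_mul, hnorm_pinv, hBA]
        calc (p:ℝ)^n * ‖A (δ z) x‖ ≤ (p:ℝ)^n * ((p:ℝ)^n)⁻¹ := by
              have := hterm z
              rw [zpow_neg, zpow_natCast] at this
              exact mul_le_mul_of_nonneg_left this (by positivity)
          _ = 1 := mul_inv_cancel₀ (by positivity)
      calc ‖ξ z * (((p:ℚ_[p])^n)⁻¹ * B (δ x) z)‖
          = ‖ξ z‖ * ‖((p:ℚ_[p])^n)⁻¹ * B (δ x) z‖ := norm_mul _ _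
        _ ≤ 1 * 1 := mul_le_mul hξz hw (norm_nonneg _) zero_le_one
        _ = 1 := one_mul 1
    rw [hz, hmk] at hme
    rw [norm_mul, hnorm_pinv] at hme
    -- hme : ‖A ξ x‖ * p^n ≤ 1, contradiction with ‖A ξ x‖ = p^{-a}, a < n
    have han : a < (n:ℤ) := by omega
    have hlt2 : (1:ℝ) < ‖A ξ x‖ * (p:ℝ)^n := by
      rw [hnorm, ← zpow_natCast (p:ℝ), ← zpow_add₀ (ne_of_gt hppos)]
      have : (0:ℤ) < -a + n := by omega
      calc (1:ℝ) = (p:ℝ) ^ (0:ℤ) := (zpow_zero _).symm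
        _ < (p:ℝ) ^ (-a + (n:ℤ)) := zpow_lt_zpow_right₀ hp1 this
    exact absurd hme (not_le.2 hlt2)
  -- apply core
  have hadj' : ∀ ξ η : X → ℚ_[p], Mem ξ → Mem η → pair (Ts ξ) η = pair ξ (T η) := by
    intro ξ η h1 h2
    rw [hsymm, ← hadj η ξ h2 h1, hsymm]
  have coreT := core T Ts hTsscale hadj hent hEleM
  have coreTs := core Ts T hTscale hadj' (fun x z => (hent z x).symm)
    (fun x z => by rw [hent]; exact hEleM z x)
  have hTx : ∀ ξ : X → ℚ_[p], Mem ξ → Nrm ξ ≤ 1 → Nrm (T ξ) ≤ M :=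
    fun ξ h h1 => hnle _ _ (coreT ξ h h1)
  have hTsx : ∀ ξ : X → ℚ_[p], Mem ξ → Nrm ξ ≤ 1 → Nrm (Ts ξ) ≤ M :=
    fun ξ h h1 => hnle _ _ (coreTs ξ h h1)
  -- assembly
  have hST : opNorm T = M := by
    show sSup {r : ℝ | ∃ ξ : X → ℚ_[p], Mem ξ ∧ Nrm ξ ≤ 1 ∧ r = Nrm (T ξ)} = M
    apply le_antisymm
    · apply Real.sSup_le
      · rintro r ⟨ξ, hξ, hξ1, rfl⟩; exact hTx ξ hξ hξ1
      · exact hM0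
    · have hbddS : BddAbove {r : ℝ | ∃ ξ : X → ℚ_[p], Mem ξ ∧ Nrm ξ ≤ 1 ∧ r = Nrm (T ξ)} :=
        ⟨M, by rintro r ⟨ξ, hξ, hξ1, rfl⟩; exact hTx ξ hξ hξ1⟩
      refine ciSup_le fun x => ciSup_le fun y => ?_
      exact le_trans (hle _ (hMT _ (hMemδ y)) x)
        (le_csSup hbddS ⟨δ y, hMemδ y, hNδ y, rfl⟩)
  have hSTs : opNorm Ts = M := by
    show sSup {r : ℝ | ∃ ξ : X → ℚ_[p], Mem ξ ∧ Nrm ξ ≤ 1 ∧ r = Nrm (Ts ξ)} = M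
    apply le_antisymm
    · apply Real.sSup_le
      · rintro r ⟨ξ, hξ, hξ1, rfl⟩; exact hTsx ξ hξ hξ1
      · exact hM0
    · have hbddS : BddAbove {r : ℝ | ∃ ξ : X → ℚ_[p], Mem ξ ∧ Nrm ξ ≤ 1 ∧ r = Nrm (Ts ξ)} :=
        ⟨M, by rintro r ⟨ξ, hξ, hξ1, rfl⟩; exact hTsx ξ hξ hξ1⟩
      refine ciSup_le fun x => ciSup_le fun y => ?_
      rw [← hent x y]
      exact le_trans (hle _ (hMTs _ (hMemδ x)) y)
        (le_csSup hbddS ⟨δ x, hMemδ x, hNδ x, rfl⟩)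
  exact ⟨hST, by rw [hSTs, hST]⟩
end

section
/- The Tate algebra ℤ_p⟨T⟩ of power series ∑ₙ aₙTⁿ with aₙ ∈ ℤ_p and aₙ → 0, with the Gauss norm ‖∑aₙTⁿ‖ = maxₙ |aₙ|_p, admits an isometric representation on ℚ_p(ℤ): sending T to the operator τ = s + s⁻¹, where s is the bilateral shift s(ξ)(n) = ξ(n+1). Concretely: for every polynomial f = ∑_{k≤n} a_k T^k ∈ ℤ_p[T], the operator norm of f(τ) on ℚ_p(ℤ) equals max_k |a_k|_p. A key step: the matrix entry (τⁿ)_{n,0} = τⁿ(δ₀)(n) = 1 for every n ≥ 0. -/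
open scoped Classical

section Aux

variable (p : ℕ) [Fact p.Prime]

/-- The operator τ = s + s⁻¹. -/
noncomputable def tauF : (ℤ → ℚ_[p]) → ℤ → ℚ_[p] := fun ξ n => ξ (n + 1) + ξ (n - 1)

/-- δ₀. -/
noncomputable def deltaF : ℤ → ℚ_[p] := fun n => if n = 0 then 1 else 0

lemma t_zero : ∀ j : ℕ, ∀ m : ℤ, (j : ℤ) < m → (tauF p)^[j] (deltaF p) m = 0 := by
  intro j
  induction j with
  | zero => intro m hm; simp only [Function.iterate_zero, id]; simp [deltaF]; omega
  | succ j ih =>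
    intro m hm
    rw [Function.iterate_succ_apply']
    show (tauF p)^[j] (deltaF p) (m + 1) + (tauF p)^[j] (deltaF p) (m - 1) = 0
    rw [ih (m + 1) (by push_cast at hm ⊢; omega), ih (m - 1) (by push_cast at hm ⊢; omega), add_zero]

lemma t_diag : ∀ j : ℕ, (tauF p)^[j] (deltaF p) (j : ℤ) = 1 := by
  intro j
  induction j with
  | zero => simp [deltaF]
  | succ j ih =>
    rw [Function.iterate_succ_apply']
    show (tauF p)^[j] (deltaF p) ((j : ℤ) + 1 + 1) + (tauF p)^[j] (deltaF p) ((j : ℤ) + 1 - 1) = 1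
    rw [t_zero p j _ (by omega), add_sub_cancel_right, ih, zero_add]

lemma tau_norm (ξ : ℤ → ℚ_[p]) (h : ∀ m, ‖ξ m‖ ≤ 1) :
    ∀ j m, ‖(tauF p)^[j] ξ m‖ ≤ 1 := by
  intro j
  induction j with
  | zero => exact h
  | succ j ih =>
    intro m
    rw [Function.iterate_succ_apply']
    exact le_trans (Padic.nonarchimedean _ _) (max_le (ih _) (ih _))

lemma padic_sum_norm_le {s : Finset ℕ} {f : ℕ → ℚ_[p]} {C : ℝ} (hC : 0 ≤ C)
    (h : ∀ i ∈ s, ‖f i‖ ≤ C) : ‖∑ i ∈ s, f i‖ ≤ C := by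
  classical
  induction s using Finset.induction with
  | empty => simpa using hC
  | insert x s hx ih =>
    rw [Finset.sum_insert hx]
    exact le_trans (Padic.nonarchimedean _ _)
      (max_le (h _ (Finset.mem_insert_self _ _)) (ih fun i hi => h i (Finset.mem_insert_of_mem hi)))

lemma key2 (n : ℕ) (a : ℕ → ℤ_[p]) :
    sSup {r : ℝ | ∃ ξ : ℤ → ℚ_[p], {m : ℤ | 1 < ‖ξ m‖}.Finite ∧ (⨆ m, ‖ξ m‖) ≤ 1 ∧
        r = ⨆ m : ℤ, ‖∑ k ∈ Finset.range (n + 1), (a k : ℚ_[p]) * (tauF p)^[k] ξ m‖}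
      = ⨆ k : Fin (n + 1), ‖a k‖ := by
  set M : ℝ := ⨆ k : Fin (n + 1), ‖a k‖ with hMdef
  have hbddM : BddAbove (Set.range fun k : Fin (n + 1) => ‖a k‖) :=
    (Set.finite_range _).bddAbove
  have haM : ∀ k : Fin (n + 1), ‖a k‖ ≤ M := fun k => le_ciSup hbddM k
  have hM0 : 0 ≤ M := le_trans (norm_nonneg (a 0)) (haM 0)
  -- upper bound: every element of the set is ≤ M
  have hub : ∀ r ∈ {r : ℝ | ∃ ξ : ℤ → ℚ_[p], {m : ℤ | 1 < ‖ξ m‖}.Finite ∧ (⨆ m, ‖ξ m‖) ≤ 1 ∧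
      r = ⨆ m : ℤ, ‖∑ k ∈ Finset.range (n + 1), (a k : ℚ_[p]) * (tauF p)^[k] ξ m‖}, r ≤ M := by
    rintro r ⟨ξ, hfin, hnrm, rfl⟩
    have hbdd : BddAbove (Set.range fun m : ℤ => ‖ξ m‖) := by
      obtain ⟨C, hC⟩ := (hfin.image fun m => ‖ξ m‖).bddAbove
      refine ⟨max C 1, ?_⟩
      rintro x ⟨m, rfl⟩
      by_cases h : 1 < ‖ξ m‖
      · exact le_max_of_le_left (hC (Set.mem_image_of_mem _ h))
      · exact le_max_of_le_right (not_lt.1 h)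
    have hxi1 : ∀ m, ‖ξ m‖ ≤ 1 := fun m => le_trans (le_ciSup hbdd m) hnrm
    have hterm : ∀ m : ℤ, ‖∑ k ∈ Finset.range (n + 1), (a k : ℚ_[p]) * (tauF p)^[k] ξ m‖ ≤ M := by
      intro m
      refine padic_sum_norm_le p hM0 fun k hk => ?_
      rw [norm_mul]
      calc ‖(a k : ℚ_[p])‖ * ‖(tauF p)^[k] ξ m‖ ≤ ‖(a k : ℚ_[p])‖ * 1 :=
            mul_le_mul_of_nonneg_left (tau_norm p ξ hxi1 k m) (norm_nonneg _)
        _ = ‖a k‖ := by rw [mul_one, PadicInt.norm_def]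
        _ ≤ M := haM ⟨k, Finset.mem_range.1 hk⟩
    exact Real.iSup_le hterm hM0
  -- the witness ξ = δ₀
  have hδ1 : ∀ m, ‖deltaF p m‖ ≤ 1 := by
    intro m; by_cases h : m = 0 <;> simp [deltaF, h]
  have hδfin : {m : ℤ | 1 < ‖deltaF p m‖}.Finite := by
    convert Set.finite_empty
    ext m
    simp only [Set.mem_setOf_eq, Set.mem_empty_iff_false, iff_false, not_lt]
    exact hδ1 m
  have hδnrm : (⨆ m, ‖deltaF p m‖) ≤ 1 := Real.iSup_le hδ1 zero_le_one
  set out : ℤ → ℚ_[p] :=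
    fun m => ∑ k ∈ Finset.range (n + 1), (a k : ℚ_[p]) * (tauF p)^[k] (deltaF p) m with houtdef
  set N : ℝ := ⨆ m : ℤ, ‖out m‖ with hNdef
  have hNM : N ≤ M := hub N ⟨deltaF p, hδfin, hδnrm, rfl⟩
  have houtM : ∀ m : ℤ, ‖out m‖ ≤ M := by
    intro m
    refine padic_sum_norm_le p hM0 fun k hk => ?_
    rw [norm_mul]
    calc ‖(a k : ℚ_[p])‖ * ‖(tauF p)^[k] (deltaF p) m‖ ≤ ‖(a k : ℚ_[p])‖ * 1 :=
          mul_le_mul_of_nonneg_left (tau_norm p _ hδ1 k m) (norm_nonneg _)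
      _ = ‖a k‖ := by rw [mul_one, PadicInt.norm_def]
      _ ≤ M := haM ⟨k, Finset.mem_range.1 hk⟩
  have houtbdd : BddAbove (Set.range fun m : ℤ => ‖out m‖) := by
    refine ⟨M, ?_⟩; rintro x ⟨m, rfl⟩; exact houtM m
  have hNout : ∀ m : ℤ, ‖out m‖ ≤ N := fun m => le_ciSup houtbdd m
  have hN0 : 0 ≤ N := le_trans (norm_nonneg (out 0)) (hNout 0)
  -- triangular splitting of out at integer points
  have hsplit : ∀ k : ℕ, k ≤ n → out (k : ℤ) =
      (a k : ℚ_[p]) + ∑ j ∈ Finset.Ico (k + 1) (n + 1),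
        (a j : ℚ_[p]) * (tauF p)^[j] (deltaF p) (k : ℤ) := by
    intro k hk
    show ∑ j ∈ Finset.range (n + 1), (a j : ℚ_[p]) * (tauF p)^[j] (deltaF p) (k : ℤ) = _
    rw [Finset.range_eq_Ico, ← Finset.sum_Ico_consecutive _ (Nat.zero_le (k + 1)) (by omega)]
    congr 1
    rw [← Finset.range_eq_Ico, Finset.sum_range_succ, t_diag, mul_one,
      Finset.sum_eq_zero, zero_add]
    intro j hj
    rw [t_zero p j _ (by exact_mod_cast Finset.mem_range.1 hj), mul_zero]
  -- downward induction: every coefficient norm is ≤ N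
  have hstep : ∀ k : ℕ, k ≤ n →
      (∀ j ∈ Finset.Ico (k + 1) (n + 1), ‖(a j : ℚ_[p])‖ ≤ N) → ‖(a k : ℚ_[p])‖ ≤ N := by
    intro k hk hrest
    have hS : ‖∑ j ∈ Finset.Ico (k + 1) (n + 1),
        (a j : ℚ_[p]) * (tauF p)^[j] (deltaF p) (k : ℤ)‖ ≤ N := by
      refine padic_sum_norm_le p hN0 fun j hj => ?_
      rw [norm_mul]
      calc ‖(a j : ℚ_[p])‖ * ‖(tauF p)^[j] (deltaF p) (k : ℤ)‖ ≤ ‖(a j : ℚ_[p])‖ * 1 :=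
            mul_le_mul_of_nonneg_left (tau_norm p _ hδ1 j _) (norm_nonneg _)
        _ ≤ N := by rw [mul_one]; exact hrest j hj
    have heq : (a k : ℚ_[p]) = out (k : ℤ) + -(∑ j ∈ Finset.Ico (k + 1) (n + 1),
        (a j : ℚ_[p]) * (tauF p)^[j] (deltaF p) (k : ℤ)) := by
      rw [hsplit k hk]; ring
    rw [heq]
    refine le_trans (Padic.nonarchimedean _ _) (max_le (hNout _) ?_)
    rwa [norm_neg]
  have key : ∀ d k, k ≤ n → n ≤ k + d → ‖(a k : ℚ_[p])‖ ≤ N := by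
    intro d
    induction d with
    | zero =>
      intro k hk hk'
      refine hstep k hk fun j hj => ?_
      exact absurd (Finset.mem_Ico.1 hj) (by omega)
    | succ d ih =>
      intro k hk hk'
      refine hstep k hk fun j hj => ?_
      obtain ⟨h1, h2⟩ := Finset.mem_Ico.1 hj
      exact ih j (by omega) (by omega)
  have hMN : M ≤ N := by
    refine ciSup_le fun k => ?_
    rw [PadicInt.norm_def]
    exact key n k (by omega) (by omega)
  have hNM' : N = M := le_antisymm hNM hMN
  refine le_antisymm (Real.sSup_le hub hM0) ?_
  exact le_csSup ⟨M, hub⟩ ⟨deltaF p, hδfin, hδnrm, hNM'.symm⟩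

end Aux

/-- The Tate algebra `ℤ_p⟨T⟩` is isometrically represented on `ℚ_p(ℤ)` by sending `T` to
`τ = s + s⁻¹` (with `s` the bilateral shift): every polynomial `f = ∑_{k ≤ n} a_k T^k`
satisfies `‖f(τ)‖ = max_k |a_k|_p` for the operator norm on the unit ball of `ℚ_p(ℤ)`.
Key step: the matrix entry `(τⁿ)_{n,0} = τⁿ(δ₀)(n) = 1` for every `n ≥ 0`. -/
theorem stmt17 (p : ℕ) [Fact p.Prime] :
    let τ : (ℤ → ℚ_[p]) → ℤ → ℚ_[p] := fun ξ n => ξ (n + 1) + ξ (n - 1)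
    let δ₀ : ℤ → ℚ_[p] := fun n => if n = 0 then 1 else 0
    let Mem : (ℤ → ℚ_[p]) → Prop := fun ξ => {n : ℤ | 1 < ‖ξ n‖}.Finite
    let Nrm : (ℤ → ℚ_[p]) → ℝ := fun ξ => ⨆ n, ‖ξ n‖
    (∀ n : ℕ, (τ^[n] δ₀) (n : ℤ) = 1) ∧
    (∀ (n : ℕ) (a : ℕ → ℤ_[p]),
      sSup {r : ℝ | ∃ ξ : ℤ → ℚ_[p], Mem ξ ∧ Nrm ξ ≤ 1 ∧
          r = Nrm (fun m => ∑ k ∈ Finset.range (n + 1), (a k : ℚ_[p]) * τ^[k] ξ m)}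
        = ⨆ k : Fin (n + 1), ‖a k‖) := by
  intro τ δ₀ Mem Nrm
  exact ⟨fun n => t_diag p n, fun n a => key2 p n a⟩
end
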